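/- Let A and B be small categories, i : A → B a fully faithful functor, C a category with all small colimits, and F : B → C a functor. Consider the natural transformation Lan_{y_B ∘ i}(F ∘ i) → Lan_{y_B}(F) of functors P(B) → C obtained from the whiskered counit Lan_{y_B}(F) ∘ i_! ∘ i^* → Lan_{y_B}(F) of the adjunction i_! ⊣ i^* by transporting along the isomorphism Lan_{y_A}(F ∘ i) ≅ Lan_{y_B}(F) ∘ i_! and the isomorphism Lan_{y_A}(F ∘ i) ∘ i^* ≅ Lan_{y_B ∘ i}(F ∘ i). After restricting along the Yoneda embedding y_B, this natural transformation agrees with the canonical natural transformation Lan_i(F ∘ i) → F induced by the counit of the adjunction between left Kan extension along i and precomposition with i. -/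

import Mathlib

open CategoryTheory CategoryTheory.Limits

universe v w u

variable {A B : Type u} [SmallCategory A] [SmallCategory B]
  {C : Type w} [Category.{v} C] [HasColimitsOfSize.{u, u} C]

def canNat (i : A ⥤ B) :
    (yoneda : A ⥤ Aᵒᵖ ⥤ Type u) ⟶
      i ⋙ (yoneda : B ⥤ Bᵒᵖ ⥤ Type u) ⋙ (Functor.whiskeringLeft Aᵒᵖ Bᵒᵖ (Type u)).obj i.op where
  app a := yonedaMap i a
  naturality a a' f := by
    ext x g
    simp [yonedaMap]

namespace CategoryTheory.Presheaf

/-- Port: the old Mathlib iso `F ⋙ yoneda ≅ yoneda ⋙ F.op.lan`, rebuilt from its ULift version. -/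
noncomputable def compYonedaIsoYonedaCompLan {C : Type u} [SmallCategory C] {D : Type u}
    [SmallCategory D] (F : C ⥤ D) :
    F ⋙ (yoneda : D ⥤ Dᵒᵖ ⥤ Type u) ≅ yoneda ⋙ F.op.lan :=
  Functor.isoWhiskerLeft F (uliftYonedaIsoYoneda.{u, u, u} (C := D)).symm ≪≫
    compULiftYonedaIsoULiftYonedaCompLan.{0} F ≪≫
    Functor.isoWhiskerRight (uliftYonedaIsoYoneda.{u, u, u} (C := C)) F.op.lan

end CategoryTheory.Presheaf

variable (i : A ⥤ B) [i.Full] [i.Faithful] (F : B ⥤ C)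

/-- The map `Lan_{y_A}(F ∘ i) ⟶ F̃ ∘ i_!` induced by the canonical identification
`F ∘ i ≅ F̃ ∘ i_! ∘ y_A`. -/
noncomputable def dOne : yoneda.leftKanExtension (i ⋙ F) ⟶ i.op.lan ⋙ yoneda.leftKanExtension F :=
  (yoneda.leftKanExtension (i ⋙ F)).descOfIsLeftKanExtension
    (yoneda.leftKanExtensionUnit (i ⋙ F)) (i.op.lan ⋙ yoneda.leftKanExtension F)
    (Functor.whiskerLeft i (yoneda.leftKanExtensionUnit F) ≫
      (Functor.associator i yoneda (yoneda.leftKanExtension F)).inv ≫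
      Functor.whiskerRight (Presheaf.compYonedaIsoYonedaCompLan i).hom (yoneda.leftKanExtension F) ≫
      (Functor.associator yoneda i.op.lan (yoneda.leftKanExtension F)).hom)

/-- The canonical comparison map `Lan_{y_B ∘ i}(F ∘ i) ⟶ Lan_{y_A}(F ∘ i) ∘ i^*`. -/
noncomputable def dTwo :
    (i ⋙ yoneda).leftKanExtension (i ⋙ F) ⟶
      (Functor.whiskeringLeft Aᵒᵖ Bᵒᵖ (Type u)).obj i.op ⋙ yoneda.leftKanExtension (i ⋙ F) :=
  ((i ⋙ yoneda).leftKanExtension (i ⋙ F)).descOfIsLeftKanExtension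
    ((i ⋙ yoneda).leftKanExtensionUnit (i ⋙ F))
    ((Functor.whiskeringLeft Aᵒᵖ Bᵒᵖ (Type u)).obj i.op ⋙ yoneda.leftKanExtension (i ⋙ F))
    (yoneda.leftKanExtensionUnit (i ⋙ F) ≫
      Functor.whiskerRight (canNat i) (yoneda.leftKanExtension (i ⋙ F)) ≫
      (Functor.associator i (yoneda ⋙ (Functor.whiskeringLeft Aᵒᵖ Bᵒᵖ (Type u)).obj i.op)
        (yoneda.leftKanExtension (i ⋙ F))).hom ≫
      Functor.whiskerLeft i (Functor.associator yoneda ((Functor.whiskeringLeft Aᵒᵖ Bᵒᵖ (Type u)).obj i.op)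
        (yoneda.leftKanExtension (i ⋙ F))).hom ≫
      (Functor.associator i yoneda
        ((Functor.whiskeringLeft Aᵒᵖ Bᵒᵖ (Type u)).obj i.op ⋙ yoneda.leftKanExtension (i ⋙ F))).inv)

/-- The transport of the whiskered counit along the two canonical identifications. -/
noncomputable def theta :
    (i ⋙ yoneda).leftKanExtension (i ⋙ F) ⟶ yoneda.leftKanExtension F :=
  dTwo i F ≫
    Functor.whiskerLeft ((Functor.whiskeringLeft Aᵒᵖ Bᵒᵖ (Type u)).obj i.op) (dOne i F) ≫
    (Functor.associator ((Functor.whiskeringLeft Aᵒᵖ Bᵒᵖ (Type u)).obj i.op) i.op.lan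
      (yoneda.leftKanExtension F)).inv ≫
    Functor.whiskerRight (i.op.lanAdjunction (Type u)).counit (yoneda.leftKanExtension F) ≫
    (yoneda.leftKanExtension F).leftUnitor.hom

/-- The canonical comparison `Lan_i(F ∘ i) ⟶ y_B ⋙ Lan_{y_B ∘ i}(F ∘ i)`. -/
noncomputable def cComp :
    i.leftKanExtension (i ⋙ F) ⟶ yoneda ⋙ (i ⋙ yoneda).leftKanExtension (i ⋙ F) :=
  (i.leftKanExtension (i ⋙ F)).descOfIsLeftKanExtension
    (i.leftKanExtensionUnit (i ⋙ F))
    (yoneda ⋙ (i ⋙ yoneda).leftKanExtension (i ⋙ F))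
    ((i ⋙ yoneda).leftKanExtensionUnit (i ⋙ F) ≫
      (Functor.associator i yoneda ((i ⋙ yoneda).leftKanExtension (i ⋙ F))).hom)

/-- The canonical natural transformation `Lan_i(F ∘ i) ⟶ F`. -/
noncomputable def kappa : i.leftKanExtension (i ⋙ F) ⟶ F :=
  (i.leftKanExtension (i ⋙ F)).descOfIsLeftKanExtension
    (i.leftKanExtensionUnit (i ⋙ F)) F (𝟙 (i ⋙ F))

set_option linter.unusedSectionVars false in
lemma key (a : A) :
    (Presheaf.compYonedaIsoYonedaCompLan i).hom.app a ≫
      i.op.lan.map ((canNat i).app a) ≫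
      (i.op.lanAdjunction (Type u)).counit.app (yoneda.obj (i.obj a)) =
    𝟙 (yoneda.obj (i.obj a)) := by
  apply (yoneda.obj (i.obj a)).hom_ext_of_isLeftKanExtension (yonedaMap i a)
  have h1 : yonedaMap i a ≫
      Functor.whiskerLeft i.op ((Presheaf.compYonedaIsoYonedaCompLan i).hom.app a) =
      i.op.lanUnit.app (yoneda.obj a) := by
    simp [Presheaf.compYonedaIsoYonedaCompLan]
    have hA : yonedaMap i a ≫ Functor.whiskerLeft i.op (uliftYonedaIsoYoneda.{u, u, u}.inv.app (i.obj a)) =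
        uliftYonedaIsoYoneda.{u, u, u}.inv.app a ≫ uliftYonedaMap.{0} i a := by
      ext x f
      simp [uliftYonedaMap, yonedaMap, uliftYonedaIsoYoneda]
      rfl
    have hB : uliftYonedaMap.{0} i a ≫
        Functor.whiskerLeft i.op ((Presheaf.compULiftYonedaIsoULiftYonedaCompLan.{0} i).hom.app a) =
        i.op.lanUnit.app (uliftYoneda.{u}.obj a) := by
      simp [Presheaf.compULiftYonedaIsoULiftYonedaCompLan]
    have hC := i.op.lanUnit.naturality (uliftYonedaIsoYoneda.{u, u, u}.hom.app a)
    dsimp at hC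
    rw [reassoc_of% hA, reassoc_of% hB, ← hC]
    simp
  have h2 := i.op.lanUnit.naturality ((canNat i).app a)
  have h3 := (i.op.lanAdjunction (Type u)).right_triangle_components (yoneda.obj (i.obj a))
  rw [Functor.lanAdjunction_unit] at h3
  dsimp at h2 h3 ⊢
  rw [reassoc_of% h1, ← reassoc_of% h2, h3]
  rfl

theorem statement5 :
    cComp i F ≫ Functor.whiskerLeft yoneda (theta i F) =
      kappa i F ≫ yoneda.leftKanExtensionUnit F := by
  apply (i.leftKanExtension (i ⋙ F)).hom_ext_of_isLeftKanExtension
    (i.leftKanExtensionUnit (i ⋙ F))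
  ext a
  dsimp
  have e0 : (i.leftKanExtensionUnit (i ⋙ F)).app a ≫ (kappa i F).app (i.obj a) =
      𝟙 _ := (i.leftKanExtension (i ⋙ F)).descOfIsLeftKanExtension_fac_app
    (i.leftKanExtensionUnit (i ⋙ F)) F (𝟙 (i ⋙ F)) a
  have e1 : (i.leftKanExtensionUnit (i ⋙ F)).app a ≫ (cComp i F).app (i.obj a) =
      ((i ⋙ yoneda).leftKanExtensionUnit (i ⋙ F)).app a := by
    have := (i.leftKanExtension (i ⋙ F)).descOfIsLeftKanExtension_fac_app
      (i.leftKanExtensionUnit (i ⋙ F)) _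
      ((i ⋙ yoneda).leftKanExtensionUnit (i ⋙ F) ≫
        (Functor.associator i yoneda ((i ⋙ yoneda).leftKanExtension (i ⋙ F))).hom) a
    simpa [cComp] using this
  have e2 : ((i ⋙ yoneda).leftKanExtensionUnit (i ⋙ F)).app a ≫
      (dTwo i F).app (yoneda.obj (i.obj a)) =
      (yoneda.leftKanExtensionUnit (i ⋙ F)).app a ≫
        (yoneda.leftKanExtension (i ⋙ F)).map ((canNat i).app a) := by
    have := ((i ⋙ yoneda).leftKanExtension (i ⋙ F)).descOfIsLeftKanExtension_fac_app
      ((i ⋙ yoneda).leftKanExtensionUnit (i ⋙ F)) _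
      (yoneda.leftKanExtensionUnit (i ⋙ F) ≫
        Functor.whiskerRight (canNat i) (yoneda.leftKanExtension (i ⋙ F)) ≫
        (Functor.associator i (yoneda ⋙ (Functor.whiskeringLeft Aᵒᵖ Bᵒᵖ (Type u)).obj i.op)
          (yoneda.leftKanExtension (i ⋙ F))).hom ≫
        Functor.whiskerLeft i (Functor.associator yoneda ((Functor.whiskeringLeft Aᵒᵖ Bᵒᵖ (Type u)).obj i.op)
          (yoneda.leftKanExtension (i ⋙ F))).hom ≫
        (Functor.associator i yoneda
          ((Functor.whiskeringLeft Aᵒᵖ Bᵒᵖ (Type u)).obj i.op ⋙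
            yoneda.leftKanExtension (i ⋙ F))).inv) a
    simpa [dTwo] using this
  have e3 := (dOne i F).naturality ((canNat i).app a)
  have e4 : (yoneda.leftKanExtensionUnit (i ⋙ F)).app a ≫
      (dOne i F).app (yoneda.obj a) =
      (yoneda.leftKanExtensionUnit F).app (i.obj a) ≫
        (yoneda.leftKanExtension F).map
          ((Presheaf.compYonedaIsoYonedaCompLan i).hom.app a) := by
    have := (yoneda.leftKanExtension (i ⋙ F)).descOfIsLeftKanExtension_fac_app
      (yoneda.leftKanExtensionUnit (i ⋙ F)) _
      (Functor.whiskerLeft i (yoneda.leftKanExtensionUnit F) ≫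
        (Functor.associator i yoneda (yoneda.leftKanExtension F)).inv ≫
        Functor.whiskerRight (Presheaf.compYonedaIsoYonedaCompLan i).hom (yoneda.leftKanExtension F) ≫
        (Functor.associator yoneda i.op.lan (yoneda.leftKanExtension F)).hom) a
    simpa [dOne] using this
  rw [reassoc_of% e0]
  rw [theta]
  dsimp
  rw [Category.comp_id, reassoc_of% e1, reassoc_of% e2]
  dsimp at e3
  rw [reassoc_of% e3, reassoc_of% e4]
  simp only [Category.id_comp, ← Functor.map_comp, Category.assoc]
  rw [key i a, CategoryTheory.Functor.map_id, Category.comp_id]
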